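/- The variance of the number of nontrivial returns of a uniformly random Dyck path of length 2n equals 2n(n-1)(2n+1)/((n+2)^2 (n+3)). -/

import Mathlib

open Finset
open scoped Classical

/-- number of up-steps among the first `m` steps of `p` (`true` = up-step `(1,1)`). -/
def upCount {N : ℕ} (p : Fin N → Bool) (m : ℕ) : ℕ :=
  (Finset.univ.filter fun i : Fin N => (i : ℕ) < m ∧ p i = true).card

/-- number of down-steps among the first `m` steps of `p` (`false` = down-step `(1,-1)`). -/
def downCount {N : ℕ} (p : Fin N → Bool) (m : ℕ) : ℕ :=
  (Finset.univ.filter fun i : Fin N => (i : ℕ) < m ∧ p i = false).card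

/-- `p` is a Dyck path: it stays weakly above the x-axis and ends on the x-axis. -/
def IsDyck {N : ℕ} (p : Fin N → Bool) : Prop :=
  (∀ m : ℕ, downCount p m ≤ upCount p m) ∧ upCount p N = downCount p N

/-- Dyck paths of length `2n`. -/
noncomputable def dyckPaths (n : ℕ) : Finset (Fin (2 * n) → Bool) :=
  Finset.univ.filter fun p => IsDyck p

/-- number of nontrivial returns of `p`: interior points where the path meets the x-axis. -/
def returns {N : ℕ} (p : Fin N → Bool) : ℕ :=
  ((Finset.Ioo 0 N).filter fun m => upCount p m = downCount p m).card


open DyckStep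

/-- return set of a Dyck word -/
def retFinset (w : DyckWord) : Finset ℕ :=
  (Finset.Ioo 0 w.toList.length).filter fun m =>
    (w.toList.take m).count U = (w.toList.take m).count D

def ret (w : DyckWord) : ℕ := (retFinset w).card

abbrev Dn (n : ℕ) := {w : DyckWord // w.semilength = n}

lemma mem_retFinset {w : DyckWord} {m : ℕ} :
    m ∈ retFinset w ↔ (0 < m ∧ m < w.toList.length) ∧
      (w.toList.take m).count U = (w.toList.take m).count D := by
  simp [retFinset, Finset.mem_filter, Finset.mem_Ioo, and_assoc]

lemma toList_take (w : DyckWord) (m : ℕ) (h) : (w.take m h).toList = w.toList.take m := rfl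
lemma toList_drop (w : DyckWord) (m : ℕ) (h) : (w.drop m h).toList = w.toList.drop m := rfl
lemma toList_add (p q : DyckWord) : (p + q).toList = p.toList ++ q.toList := rfl

lemma two_mul_sl_take (w : DyckWord) (m : ℕ) (h) (hm : m ≤ w.toList.length) :
    2 * (w.take m h).semilength = m := by
  rw [DyckWord.two_mul_semilength_eq_length, toList_take, List.length_take]
  omega

lemma take_add_drop (w : DyckWord) (m : ℕ) (h) : w.take m h + w.drop m h = w :=
  DyckWord.ext (List.take_append_drop m w.toList)

lemma sl_take_add_sl_drop (w : DyckWord) (m : ℕ) (h) :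
    (w.take m h).semilength + (w.drop m h).semilength = w.semilength := by
  conv_rhs => rw [← take_add_drop w m h]
  rw [DyckWord.semilength_add]

def srcFinset (n : ℕ) : Finset (Σ _ : Dn n, ℕ) :=
  (Finset.univ : Finset (Dn n)).sigma (fun w => retFinset w.1)

/-- forward map: split a Dyck word at a return point -/
def fwd (n : ℕ) : (a : Σ _ : Dn n, ℕ) → a ∈ srcFinset n → Σ k : ℕ, Dn k × Dn (n - k) :=
  fun a ha =>
    have hb : (a.1.1.toList.take a.2).count U = (a.1.1.toList.take a.2).count D :=
      (mem_retFinset.mp (Finset.mem_sigma.mp ha).2).2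
    ⟨(a.1.1.take a.2 hb).semilength,
      (⟨a.1.1.take a.2 hb, rfl⟩,
       ⟨a.1.1.drop a.2 hb, by
          have := sl_take_add_sl_drop a.1.1 a.2 hb
          rw [a.1.2] at this; omega⟩)⟩

def tgt (n : ℕ) : Finset (Σ k : ℕ, Dn k × Dn (n - k)) :=
  (Finset.Ico 1 n).sigma (fun k => (Finset.univ : Finset (Dn k × Dn (n - k))))

/-- backward map: concatenate two Dyck words -/
def bwd (n : ℕ) : (b : Σ k : ℕ, Dn k × Dn (n - k)) → b ∈ tgt n → Σ _ : Dn n, ℕ :=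
  fun b hb =>
    ⟨⟨b.2.1.1 + b.2.2.1, by
        rw [DyckWord.semilength_add, b.2.1.2, b.2.2.2]
        have := Finset.mem_Ico.mp (Finset.mem_sigma.mp hb).1
        omega⟩, 2 * b.1⟩

/-- value of `F` on the two pieces of `w` split at a return point `m` -/
noncomputable def splitF (F : DyckWord → DyckWord → ℚ) (w : DyckWord) (m : ℕ) : ℚ :=
  if h : (w.toList.take m).count U = (w.toList.take m).count D then
    F (w.take m h) (w.drop m h) else 0

lemma master (n : ℕ) (F : DyckWord → DyckWord → ℚ) :
    (∑ w : Dn n, ∑ m ∈ retFinset w.1, splitF F w.1 m)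
      = ∑ k ∈ Finset.Ico 1 n, ∑ p : Dn k, ∑ q : Dn (n - k), F p.1 q.1 := by
  rw [Finset.sum_sigma' Finset.univ (fun w : Dn n => retFinset w.1)
    (fun w m => splitF F w.1 m)]
  have hr : ∀ k ∈ Finset.Ico 1 n, (∑ p : Dn k, ∑ q : Dn (n - k), F p.1 q.1)
      = ∑ x : Dn k × Dn (n - k), F x.1.1 x.2.1 := by
    intro k _
    rw [Fintype.sum_prod_type]
  rw [Finset.sum_congr rfl hr,
    Finset.sum_sigma' (Finset.Ico 1 n) (fun k => (Finset.univ : Finset (Dn k × Dn (n - k))))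
      (fun k x => F x.1.1 x.2.1)]
  refine Finset.sum_bij' (fwd n) (bwd n) ?_ ?_ ?_ ?_ ?_
  · -- hi : forward lands in target
    intro a ha
    obtain ⟨w, m⟩ := a
    have hm : m ∈ retFinset w.1 := (Finset.mem_sigma.mp ha).2
    obtain ⟨⟨hm0, hmlen⟩, hb⟩ := mem_retFinset.mp hm
    rw [Finset.mem_sigma]
    refine ⟨?_, Finset.mem_univ _⟩
    show (w.1.take m _).semilength ∈ Finset.Ico 1 n
    have h2 : 2 * (w.1.take m hb).semilength = m := two_mul_sl_take _ _ _ hmlen.le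
    have hlen : w.1.toList.length = 2 * n := by
      rw [← DyckWord.two_mul_semilength_eq_length, w.2]
    rw [Finset.mem_Ico]
    omega
  · -- hj : backward lands in source
    intro b hb
    obtain ⟨k, p, q⟩ := b
    have hk : 1 ≤ k ∧ k < n := Finset.mem_Ico.mp (Finset.mem_sigma.mp hb).1
    rw [Finset.mem_sigma]
    refine ⟨Finset.mem_univ _, ?_⟩
    show 2 * k ∈ retFinset (p.1 + q.1)
    rw [mem_retFinset]
    have hlp : p.1.toList.length = 2 * k := by
      rw [← DyckWord.two_mul_semilength_eq_length, p.2]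
    have hlq : q.1.toList.length = 2 * (n - k) := by
      rw [← DyckWord.two_mul_semilength_eq_length, q.2]
    refine ⟨⟨by omega, ?_⟩, ?_⟩
    · rw [toList_add, List.length_append]; omega
    · rw [toList_add, List.take_left' hlp]
      exact p.1.count_U_eq_count_D
  · -- left inverse
    intro a ha
    obtain ⟨w, m⟩ := a
    have hm : m ∈ retFinset w.1 := (Finset.mem_sigma.mp ha).2
    obtain ⟨⟨hm0, hmlen⟩, hb⟩ := mem_retFinset.mp hm
    have h2 : 2 * (w.1.take m hb).semilength = m := two_mul_sl_take _ _ _ hmlen.le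
    have hw : w.1.take m hb + w.1.drop m hb = w.1 := take_add_drop _ _ _
    obtain ⟨w, hwsl⟩ := w
    show (⟨⟨_ + _, _⟩, 2 * _⟩ : Σ _ : Dn n, ℕ) = ⟨⟨w, hwsl⟩, m⟩
    have key : ∀ (x : DyckWord) (_ : x = w) (pf : x.semilength = n) (mm : ℕ) (_ : mm = m),
        (⟨⟨x, pf⟩, mm⟩ : Σ _ : Dn n, ℕ) = ⟨⟨w, hwsl⟩, m⟩ := by
      rintro x rfl pf mm rfl; rfl
    exact key _ hw _ _ h2
  · -- right inverse
    intro b hb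
    obtain ⟨k, p, q⟩ := b
    have hk : 1 ≤ k ∧ k < n := Finset.mem_Ico.mp (Finset.mem_sigma.mp hb).1
    have hlp : p.1.toList.length = 2 * k := by
      rw [← DyckWord.two_mul_semilength_eq_length, p.2]
    have hbal : ((p.1 + q.1).toList.take (2 * k)).count U
        = ((p.1 + q.1).toList.take (2 * k)).count D := by
      rw [toList_add, List.take_left' hlp]
      exact p.1.count_U_eq_count_D
    have hT : ∀ h, (p.1 + q.1).take (2 * k) h = p.1 :=
      fun h => DyckWord.ext (by rw [toList_take, toList_add, List.take_left' hlp])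
    have hD : ∀ h, (p.1 + q.1).drop (2 * k) h = q.1 :=
      fun h => DyckWord.ext (by rw [toList_drop, toList_add, List.drop_left' hlp])
    obtain ⟨p, hp⟩ := p
    obtain ⟨q, hq⟩ := q
    subst hp
    have key : ∀ (x : DyckWord) (_ : x = p) (y : DyckWord) (_ : y = q)
        (pf : y.semilength = n - x.semilength),
        (⟨x.semilength, (⟨x, rfl⟩, ⟨y, pf⟩)⟩ : Σ k : ℕ, Dn k × Dn (n - k))
          = ⟨p.semilength, (⟨p, rfl⟩, ⟨q, hq⟩)⟩ := by
      rintro x rfl y rfl pf; rfl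
    exact key _ (hT hbal) _ (hD hbal) _
  · -- value equality
    intro a ha
    obtain ⟨w, m⟩ := a
    have hm : m ∈ retFinset w.1 := (Finset.mem_sigma.mp ha).2
    obtain ⟨⟨hm0, hmlen⟩, hb⟩ := mem_retFinset.mp hm
    show splitF F w.1 m = _
    simp only [splitF, hb, dif_pos]
    rfl

lemma retFinset_take (w : DyckWord) (m : ℕ) (h) (hm : m ≤ w.toList.length) :
    retFinset (w.take m h) = (retFinset w).filter (· < m) := by
  ext j
  simp only [mem_retFinset, Finset.mem_filter, toList_take, List.length_take, List.take_take]
  constructor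
  · rintro ⟨⟨hj0, hjlt⟩, hbal⟩
    have hjm : j < m := lt_of_lt_of_le hjlt (min_le_left _ _)
    rw [min_eq_left hjm.le] at hbal
    exact ⟨⟨⟨hj0, lt_of_lt_of_le hjm hm⟩, hbal⟩, hjm⟩
  · rintro ⟨⟨⟨hj0, hjlen⟩, hbal⟩, hjm⟩
    refine ⟨⟨hj0, lt_min hjm hjlen⟩, ?_⟩
    rw [min_eq_left hjm.le]
    exact hbal

lemma app1 (n : ℕ) :
    ∑ w : Dn n, (ret w.1 : ℚ)
      = ∑ k ∈ Finset.Ico 1 n, (catalan k : ℚ) * (catalan (n - k) : ℚ) := by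
  have hm := master n (fun _ _ => 1)
  have hL : ∀ w : Dn n, (∑ m ∈ retFinset w.1, splitF (fun _ _ => 1) w.1 m) = (ret w.1 : ℚ) := by
    intro w
    rw [Finset.sum_congr rfl (fun m hmm => ?_), Finset.sum_const, nsmul_eq_mul, mul_one, ret]
    have hb := (mem_retFinset.mp hmm).2
    simp only [splitF, hb, dif_pos]
  rw [← Finset.sum_congr rfl (fun w _ => hL w), hm]
  apply Finset.sum_congr rfl
  intro k _
  rw [Finset.sum_const, Finset.sum_const, Finset.card_univ, Finset.card_univ,
    DyckWord.card_dyckWord_semilength_eq_catalan, DyckWord.card_dyckWord_semilength_eq_catalan]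
  simp [mul_comm]

lemma app2 (n : ℕ) :
    ∑ w : Dn n, ∑ m ∈ retFinset w.1, (((retFinset w.1).filter (· < m)).card : ℚ)
      = ∑ k ∈ Finset.Ico 1 n, (∑ p : Dn k, (ret p.1 : ℚ)) * (catalan (n - k) : ℚ) := by
  have hm := master n (fun p _ => (ret p : ℚ))
  have hL : ∀ w : Dn n, (∑ m ∈ retFinset w.1, splitF (fun p _ => (ret p : ℚ)) w.1 m)
      = ∑ m ∈ retFinset w.1, (((retFinset w.1).filter (· < m)).card : ℚ) := by
    intro w
    apply Finset.sum_congr rfl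
    intro m hmm
    obtain ⟨⟨hm0, hmlen⟩, hb⟩ := mem_retFinset.mp hmm
    simp only [splitF, hb, dif_pos]
    rw [ret, retFinset_take w.1 m hb hmlen.le]
  rw [← Finset.sum_congr rfl (fun w _ => hL w), hm]
  apply Finset.sum_congr rfl
  intro k _
  rw [Finset.sum_comm, Finset.sum_const, Finset.card_univ,
    DyckWord.card_dyckWord_semilength_eq_catalan, nsmul_eq_mul, mul_comm]

lemma card_filter_lt_add (s : Finset ℕ) {b : ℕ} (hb : b ∈ s) :
    (s.filter (· < b)).card + (s.filter (b < ·)).card + 1 = s.card := by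
  have h1 : (s.filter (· < b)).card + (s.filter (fun a => ¬ a < b)).card = s.card :=
    Finset.card_filter_add_card_filter_not _
  have h2 : s.filter (fun a => ¬ a < b) = insert b (s.filter (b < ·)) := by
    ext a
    simp only [mem_filter, mem_insert, not_lt]
    constructor
    · rintro ⟨ha, hba⟩
      rcases eq_or_lt_of_le hba with h | h
      · exact Or.inl h.symm
      · exact Or.inr ⟨ha, h⟩
    · rintro (rfl | ⟨ha, h⟩)
      · exact ⟨hb, le_refl _⟩
      · exact ⟨ha, h.le⟩
  have h3 : b ∉ s.filter (b < ·) := by simp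
  rw [h2, Finset.card_insert_of_notMem h3] at h1
  omega

lemma card_sq_eq (s : Finset ℕ) :
    s.card ^ 2 = s.card + 2 * ∑ b ∈ s, (s.filter (· < b)).card := by
  have h2 : ∑ b ∈ s, (s.filter (b < ·)).card = ∑ b ∈ s, (s.filter (· < b)).card := by
    simp only [Finset.card_filter]
    rw [Finset.sum_comm]
  have h4 : ∑ b ∈ s, ((s.filter (· < b)).card + (s.filter (b < ·)).card + 1) = s.card * s.card := by
    rw [Finset.sum_congr rfl (fun b hb => card_filter_lt_add s hb), Finset.sum_const,
      smul_eq_mul, mul_comm]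
  simp only [Finset.sum_add_distrib, Finset.sum_const, smul_eq_mul, mul_one, h2] at h4
  nlinarith [h4]

lemma catalan_pos' (n : ℕ) : 0 < catalan n := by
  have h := succ_mul_catalan_eq_centralBinom n
  have hc := Nat.centralBinom_pos n
  rcases Nat.eq_zero_or_pos (catalan n) with h0 | h0
  · rw [h0, mul_zero] at h; omega
  · exact h0

lemma cat_ratio (n : ℕ) :
    ((n : ℚ) + 2) * (catalan (n + 1) : ℚ) = 2 * (2 * n + 1) * (catalan n : ℚ) := by
  have h1 := succ_mul_catalan_eq_centralBinom (n + 1)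
  have h2 := succ_mul_catalan_eq_centralBinom n
  have h3 := Nat.succ_mul_centralBinom_succ n
  have key : (n + 1) * ((n + 2) * catalan (n + 1)) = (n + 1) * (2 * (2 * n + 1) * catalan n) := by
    calc (n + 1) * ((n + 2) * catalan (n + 1)) = (n + 1) * ((n + 1 + 1) * catalan (n + 1)) := by
          ring
      _ = (n + 1) * Nat.centralBinom (n + 1) := by rw [h1]
      _ = 2 * (2 * n + 1) * Nat.centralBinom n := h3
      _ = 2 * (2 * n + 1) * ((n + 1) * catalan n) := by rw [h2]
      _ = (n + 1) * (2 * (2 * n + 1) * catalan n) := by ring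
  have key2 : (n + 2) * catalan (n + 1) = 2 * (2 * n + 1) * catalan n :=
    Nat.eq_of_mul_eq_mul_left (by omega) key
  have := congrArg (fun x : ℕ => (x : ℚ)) key2
  push_cast at this
  linarith [this]

lemma conv1 (n : ℕ) (hn : 1 ≤ n) :
    ∑ k ∈ Finset.Ico 1 n, (catalan k : ℚ) * (catalan (n - k) : ℚ)
      = (catalan (n + 1) : ℚ) - 2 * (catalan n : ℚ) := by
  have h := catalan_succ n
  have h2 : (catalan (n+1) : ℚ) = ∑ i ∈ Finset.range (n+1), (catalan i : ℚ) * (catalan (n - i) : ℚ) := by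
    rw [h]
    push_cast
    rw [Fin.sum_univ_eq_sum_range (fun i => (catalan i : ℚ) * (catalan (n - i) : ℚ))]
  rw [Finset.range_eq_Ico, Finset.sum_Ico_succ_top (by omega : 0 ≤ n),
    Finset.sum_eq_sum_Ico_succ_bot (by omega : 0 < n)] at h2
  simp only [catalan_zero, Nat.sub_zero, Nat.sub_self, Nat.cast_one] at h2
  ring_nf at h2 ⊢
  linarith [h2]

lemma conv2 (n : ℕ) (hn : 1 ≤ n) :
    ∑ k ∈ Finset.Ico 1 n, (catalan (k + 1) : ℚ) * (catalan (n - k) : ℚ)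
      = (catalan (n + 2) : ℚ) - 2 * (catalan (n + 1) : ℚ) - (catalan n : ℚ) := by
  have h := conv1 (n + 1) (by omega)
  rw [Finset.sum_eq_sum_Ico_succ_bot (by omega : 1 < n + 1)] at h
  simp only [catalan_one, Nat.cast_one, one_mul, Nat.add_sub_cancel] at h
  have hre : ∑ k ∈ Finset.Ico 2 (n + 1), (catalan k : ℚ) * (catalan (n + 1 - k) : ℚ)
      = ∑ k ∈ Finset.Ico 1 n, (catalan (k + 1) : ℚ) * (catalan (n - k) : ℚ) := by
    rw [show (2 : ℕ) = 1 + 1 by rfl, Finset.sum_Ico_eq_sum_range, Finset.sum_Ico_eq_sum_range]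
    apply Finset.sum_congr
    · congr 1 <;> omega
    · intro i hi
      simp only [Finset.mem_range] at hi
      have e1 : 1 + 1 + i = (1 + i) + 1 := by omega
      have e2 : n + 1 - (1 + i + 1) = n - (1 + i) := by omega
      rw [e1, e2]
  rw [hre] at h
  linarith [h]

lemma mom1 (n : ℕ) (hn : 1 ≤ n) :
    ∑ w : Dn n, (ret w.1 : ℚ) = (catalan (n + 1) : ℚ) - 2 * (catalan n : ℚ) := by
  rw [app1, conv1 n hn]

lemma mom2 (n : ℕ) (hn : 1 ≤ n) :
    ∑ w : Dn n, (ret w.1 : ℚ) ^ 2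
      = 2 * (catalan (n + 2) : ℚ) - 7 * (catalan (n + 1) : ℚ) + 4 * (catalan n : ℚ) := by
  have hsq : ∀ w : Dn n, ((ret w.1 : ℚ)) ^ 2 = (ret w.1 : ℚ)
      + 2 * ∑ m ∈ retFinset w.1, (((retFinset w.1).filter (· < m)).card : ℚ) := by
    intro w
    have h := congrArg (fun x : ℕ => (x : ℚ)) (card_sq_eq (retFinset w.1))
    push_cast at h
    rw [ret]
    push_cast
    linarith [h]
  rw [Finset.sum_congr rfl (fun w _ => hsq w), Finset.sum_add_distrib, ← Finset.mul_sum,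
    mom1 n hn, app2]
  have h3 : ∑ k ∈ Finset.Ico 1 n, (∑ p : Dn k, (ret p.1 : ℚ)) * (catalan (n - k) : ℚ)
      = ∑ k ∈ Finset.Ico 1 n, ((catalan (k + 1) : ℚ) - 2 * (catalan k : ℚ)) * (catalan (n - k) : ℚ) :=
    Finset.sum_congr rfl (fun k hk => by rw [mom1 k (Finset.mem_Ico.mp hk).1])
  rw [h3]
  have h4 : ∑ k ∈ Finset.Ico 1 n, ((catalan (k + 1) : ℚ) - 2 * (catalan k : ℚ)) * (catalan (n - k) : ℚ)
      = (∑ k ∈ Finset.Ico 1 n, (catalan (k + 1) : ℚ) * (catalan (n - k) : ℚ))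
        - 2 * ∑ k ∈ Finset.Ico 1 n, (catalan k : ℚ) * (catalan (n - k) : ℚ) := by
    rw [Finset.mul_sum, ← Finset.sum_sub_distrib]
    apply Finset.sum_congr rfl
    intro k _
    ring
  rw [h4, conv1 n hn, conv2 n hn]
  ring


def toW {N : ℕ} (p : Fin N → Bool) : List DyckStep :=
  List.ofFn (fun i => if p i then U else D)

lemma length_toW {N : ℕ} (p : Fin N → Bool) : (toW p).length = N := List.length_ofFn

lemma upCount_succ {N : ℕ} (p : Fin N → Bool) (m : ℕ) (hm : m < N) :
    upCount p (m + 1) = upCount p m + (if p ⟨m, hm⟩ = true then 1 else 0) := by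
  unfold upCount
  rw [Finset.card_filter, Finset.card_filter]
  have hpt : ∀ i : Fin N, (if ((i : ℕ) < m + 1 ∧ p i = true) then (1:ℕ) else 0)
      = (if ((i : ℕ) < m ∧ p i = true) then 1 else 0)
        + (if (i = ⟨m, hm⟩ ∧ p i = true) then 1 else 0) := by
    intro i
    by_cases hP : p i = true
    · by_cases hlt : (i : ℕ) < m
      · have : i ≠ ⟨m, hm⟩ := by
          intro h; rw [h] at hlt; simp at hlt
        simp [hP, hlt, this, Nat.lt_succ_of_lt hlt]
      · by_cases heq : (i : ℕ) = m
        · have : i = ⟨m, hm⟩ := Fin.ext heq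
          simp [hP, hlt, this, heq]
        · have h2 : ¬ ((i : ℕ) < m + 1) := by omega
          have hne : i ≠ ⟨m, hm⟩ := by
            intro h; rw [h] at heq; simp at heq
          simp [hP, hlt, h2, hne]
    · simp [hP]
  rw [Finset.sum_congr rfl (fun i _ => hpt i), Finset.sum_add_distrib]
  congr 1
  rw [Finset.sum_eq_single (⟨m, hm⟩ : Fin N)]
  · simp
  · intro b _ hb; simp [hb]
  · intro h; exact absurd (Finset.mem_univ _) h

lemma upCount_stable {N : ℕ} (p : Fin N → Bool) (m : ℕ) (hm : N ≤ m) :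
    upCount p (m + 1) = upCount p m := by
  unfold upCount
  congr 1
  apply Finset.filter_congr
  intro i _
  have hi : (i : ℕ) < N := i.isLt
  constructor
  · rintro ⟨-, h⟩; exact ⟨by omega, h⟩
  · rintro ⟨-, h⟩; exact ⟨by omega, h⟩

lemma downCount_succ {N : ℕ} (p : Fin N → Bool) (m : ℕ) (hm : m < N) :
    downCount p (m + 1) = downCount p m + (if p ⟨m, hm⟩ = false then 1 else 0) := by
  unfold downCount
  rw [Finset.card_filter, Finset.card_filter]
  have hpt : ∀ i : Fin N, (if ((i : ℕ) < m + 1 ∧ p i = false) then (1:ℕ) else 0)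
      = (if ((i : ℕ) < m ∧ p i = false) then 1 else 0)
        + (if (i = ⟨m, hm⟩ ∧ p i = false) then 1 else 0) := by
    intro i
    by_cases hP : p i = false
    · by_cases hlt : (i : ℕ) < m
      · have : i ≠ ⟨m, hm⟩ := by
          intro h; rw [h] at hlt; simp at hlt
        simp [hP, hlt, this, Nat.lt_succ_of_lt hlt]
      · by_cases heq : (i : ℕ) = m
        · have : i = ⟨m, hm⟩ := Fin.ext heq
          simp [hP, hlt, this, heq]
        · have h2 : ¬ ((i : ℕ) < m + 1) := by omega
          have hne : i ≠ ⟨m, hm⟩ := by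
            intro h; rw [h] at heq; simp at heq
          simp [hP, hlt, h2, hne]
    · simp [hP]
  rw [Finset.sum_congr rfl (fun i _ => hpt i), Finset.sum_add_distrib]
  congr 1
  rw [Finset.sum_eq_single (⟨m, hm⟩ : Fin N)]
  · simp
  · intro b _ hb; simp [hb]
  · intro h; exact absurd (Finset.mem_univ _) h

lemma downCount_stable {N : ℕ} (p : Fin N → Bool) (m : ℕ) (hm : N ≤ m) :
    downCount p (m + 1) = downCount p m := by
  unfold downCount
  congr 1
  apply Finset.filter_congr
  intro i _
  have hi : (i : ℕ) < N := i.isLt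
  constructor
  · rintro ⟨-, h⟩; exact ⟨by omega, h⟩
  · rintro ⟨-, h⟩; exact ⟨by omega, h⟩

lemma count_take_toW {N : ℕ} (p : Fin N → Bool) (m : ℕ) :
    ((toW p).take m).count U = upCount p m ∧ ((toW p).take m).count D = downCount p m := by
  induction m with
  | zero => simp [upCount, downCount]
  | succ m ih =>
    by_cases hm : m < N
    · have hget : (toW p)[m]? = some (if p ⟨m, hm⟩ then U else D) := by
        rw [toW, List.getElem?_ofFn]
        simp [List.ofFnNthVal, hm]
      rw [List.take_succ, hget]
      simp only [Option.toList_some, List.count_append, List.count_singleton]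
      constructor
      · rw [ih.1, upCount_succ p m hm]
        by_cases hpm : p ⟨m, hm⟩ <;> simp [hpm]
      · rw [ih.2, downCount_succ p m hm]
        by_cases hpm : p ⟨m, hm⟩ <;> simp [hpm]
    · have hN : N ≤ m := by omega
      have hlen : (toW p).length ≤ m := by rw [length_toW]; exact hN
      rw [List.take_of_length_le hlen, List.take_of_length_le (by omega)] at *
      rw [upCount_stable p m hN, downCount_stable p m hN]
      exact ih

lemma upd_total {N : ℕ} (p : Fin N → Bool) : upCount p N + downCount p N = N := by
  rw [upCount, downCount]
  have h1 : (Finset.univ.filter fun i : Fin N => (i : ℕ) < N ∧ p i = true)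
      = Finset.univ.filter (fun i : Fin N => p i = true) := by
    apply Finset.filter_congr; intro i _; simp [i.isLt]
  have h2 : (Finset.univ.filter fun i : Fin N => (i : ℕ) < N ∧ p i = false)
      = Finset.univ.filter (fun i : Fin N => ¬ (p i = true)) := by
    apply Finset.filter_congr; intro i _; simp [i.isLt]
  rw [h1, h2, Finset.card_filter_add_card_filter_not]
  simp

/-- the Dyck word of a Dyck path -/
def toDW {N : ℕ} (p : Fin N → Bool) (hp : IsDyck p) : DyckWord where
  toList := toW p
  count_U_eq_count_D := by
    have h := count_take_toW p N
    rw [List.take_of_length_le (by rw [length_toW])] at h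
    rw [h.1, h.2, hp.2]
  count_D_le_count_U i := by
    rw [(count_take_toW p i).1, (count_take_toW p i).2]
    exact hp.1 i

lemma toDW_toList {N : ℕ} (p : Fin N → Bool) (hp : IsDyck p) : (toDW p hp).toList = toW p := rfl

lemma sl_toDW {n : ℕ} (p : Fin (2 * n) → Bool) (hp : IsDyck p) :
    (toDW p hp).semilength = n := by
  have h := count_take_toW p (2 * n)
  rw [List.take_of_length_le (by rw [length_toW])] at h
  have htot := upd_total p
  have : (toDW p hp).semilength = upCount p (2 * n) := h.1
  rw [this] at *
  have h2 := hp.2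
  omega

/-- the Dyck path of a Dyck word of semilength n -/
def fromW {n : ℕ} (w : DyckWord) (hw : w.semilength = n) : Fin (2 * n) → Bool :=
  fun i => decide (w.toList[(i : ℕ)]'(by
    rw [← DyckWord.two_mul_semilength_eq_length, hw]; exact i.isLt) = U)

lemma toW_fromW {n : ℕ} (w : DyckWord) (hw : w.semilength = n) :
    toW (fromW w hw) = w.toList := by
  have hlen : w.toList.length = 2 * n := by
    rw [← DyckWord.two_mul_semilength_eq_length, hw]
  apply List.ext_getElem
  · rw [toW, List.length_ofFn, hlen]
  · intro i h1 h2
    simp only [toW]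
    rw [List.getElem_ofFn]
    simp only [fromW]
    rcases (w.toList[i]'h2).dichotomy with h | h <;> simp [h]

lemma fromW_toDW {n : ℕ} (p : Fin (2 * n) → Bool) (hp : IsDyck p) :
    fromW (toDW p hp) (sl_toDW p hp) = p := by
  funext i
  simp only [fromW, toDW_toList, toW, List.getElem_ofFn]
  by_cases h : p i
  · simp only [Fin.eta] at *
    simp [h]
  · simp only [Fin.eta] at *
    simp [Bool.not_eq_true] at h
    simp [h]

lemma returns_eq_ret {N : ℕ} (p : Fin N → Bool) (hp : IsDyck p) :
    returns p = ret (toDW p hp) := by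
  rw [returns, ret, retFinset]
  congr 1
  rw [toDW_toList, length_toW]
  apply Finset.filter_congr
  intro m _
  rw [(count_take_toW p m).1, (count_take_toW p m).2]

lemma mem_dyckPaths {n : ℕ} {p : Fin (2 * n) → Bool} :
    p ∈ dyckPaths n ↔ IsDyck p := by
  rw [dyckPaths, Finset.mem_filter]
  simp

lemma sum_bridge (n : ℕ) (f : ℕ → ℚ) :
    ∑ p ∈ dyckPaths n, f (returns p) = ∑ w : Dn n, f (ret w.1) := by
  refine Finset.sum_bij'
    (i := fun p hp => (⟨toDW p (mem_dyckPaths.mp hp), sl_toDW p (mem_dyckPaths.mp hp)⟩ : Dn n))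
    (j := fun w _ => fromW w.1 w.2) ?_ ?_ ?_ ?_ ?_
  · intro p hp; exact Finset.mem_univ _
  · intro w _
    rw [mem_dyckPaths]
    have hlist := toW_fromW w.1 w.2
    have key := fun m => count_take_toW (fromW w.1 w.2) m
    constructor
    · intro m
      rw [← (key m).1, ← (key m).2, hlist]
      exact w.1.count_D_le_count_U m
    · have h1 := (key (2 * n)).1
      have h2 := (key (2 * n)).2
      rw [hlist] at h1 h2
      rw [← h1, ← h2, List.take_of_length_le (by
        rw [← DyckWord.two_mul_semilength_eq_length, w.2])]
      exact w.1.count_U_eq_count_D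
  · intro p hp
    exact fromW_toDW p (mem_dyckPaths.mp hp)
  · intro w _
    apply Subtype.ext
    apply DyckWord.ext
    rw [toDW_toList]
    exact toW_fromW w.1 w.2
  · intro p hp
    rw [returns_eq_ret p (mem_dyckPaths.mp hp)]

lemma card_bridge (n : ℕ) : (dyckPaths n).card = catalan n := by
  have h := sum_bridge n (fun _ => (1 : ℚ))
  rw [Finset.sum_const, Finset.sum_const, Finset.card_univ,
    DyckWord.card_dyckWord_semilength_eq_catalan] at h
  have := nsmul_eq_mul (α := ℚ)
  simp only [nsmul_eq_mul, mul_one] at h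
  exact_mod_cast h

/-- The variance of the number of nontrivial returns of a uniformly random Dyck path of
length `2n` equals `2n(n-1)(2n+1)/((n+2)²(n+3))`. -/
theorem variance_nontrivial_returns_dyck (n : ℕ) (hn : 1 ≤ n) :
    (∑ p ∈ dyckPaths n, (returns p : ℚ) ^ 2) / ((dyckPaths n).card : ℚ)
        - ((∑ p ∈ dyckPaths n, (returns p : ℚ)) / ((dyckPaths n).card : ℚ)) ^ 2
      = 2 * (n : ℚ) * ((n : ℚ) - 1) * (2 * (n : ℚ) + 1)
          / (((n : ℚ) + 2) ^ 2 * ((n : ℚ) + 3)) := by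
  have hcard : ((dyckPaths n).card : ℚ) = (catalan n : ℚ) := by
    rw [card_bridge n]
  have hS1 : ∑ p ∈ dyckPaths n, (returns p : ℚ)
      = (catalan (n + 1) : ℚ) - 2 * (catalan n : ℚ) := by
    rw [sum_bridge n (fun k => (k : ℚ)), mom1 n hn]
  have hS2 : ∑ p ∈ dyckPaths n, (returns p : ℚ) ^ 2
      = 2 * (catalan (n + 2) : ℚ) - 7 * (catalan (n + 1) : ℚ) + 4 * (catalan n : ℚ) := by
    rw [sum_bridge n (fun k => (k : ℚ) ^ 2), mom2 n hn]
  have hc0 : (0 : ℚ) < (catalan n : ℚ) := by exact_mod_cast catalan_pos' n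
  have e1 : ((n : ℚ) + 2) * (catalan (n + 1) : ℚ) = 2 * (2 * n + 1) * (catalan n : ℚ) :=
    cat_ratio n
  have e2 : ((n : ℚ) + 3) * (catalan (n + 2) : ℚ) = 2 * (2 * n + 3) * (catalan (n + 1) : ℚ) := by
    have := cat_ratio (n + 1)
    push_cast at this ⊢
    linarith [this]
  have hn2 : ((n : ℚ) + 2) ≠ 0 := by positivity
  have hn3 : ((n : ℚ) + 3) ≠ 0 := by positivity
  have hcne : (catalan n : ℚ) ≠ 0 := ne_of_gt hc0
  have h1 : (catalan (n + 1) : ℚ) = 2 * (2 * n + 1) * (catalan n : ℚ) / ((n : ℚ) + 2) := by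
    field_simp
    linarith [e1]
  have h2 : (catalan (n + 2) : ℚ)
      = 2 * (2 * (n : ℚ) + 3) * (2 * (2 * n + 1) * (catalan n : ℚ) / ((n : ℚ) + 2))
        / ((n : ℚ) + 3) := by
    rw [← h1]
    field_simp
    linarith [e2]
  rw [hcard, hS1, hS2, h2, h1]
  field_simp
  ring
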